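/- Let k ≥ 2 be an integer and let φ : (0,∞) → (0,∞) be a continuously differentiable function such that −k/s < (log φ)'(s) < 0 for every s > 0, i.e. −k·φ(s) < s·φ'(s) < 0. Then φ satisfies condition (1.11): for all reals t > s > 0, (s·φ(s)^{1/k} − t·φ(t)^{1/k}) · (φ(s)^{(k−1)/k} − φ(t)^{(k−1)/k}) < 0. -/

import Mathlib

/-- If `φ : (0,∞) → (0,∞)` is `C¹` with `−k·φ(s) < s·φ'(s) < 0` for all `s > 0`
(i.e. `−k/s < (log φ)'(s) < 0`), then `φ` satisfies condition (1.11):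
`(s·φ(s)^{1/k} − t·φ(t)^{1/k}) · (φ(s)^{(k−1)/k} − φ(t)^{(k−1)/k}) < 0`
for all `t > s > 0`. -/
theorem condition_1_11_of_log_deriv (k : ℕ) (hk : 2 ≤ k) (φ φ' : ℝ → ℝ)
    (hpos : ∀ s : ℝ, 0 < s → 0 < φ s)
    (hderiv : ∀ s : ℝ, 0 < s → HasDerivAt φ (φ' s) s)
    (hcont : ContinuousOn φ' (Set.Ioi 0))
    (hlow : ∀ s : ℝ, 0 < s → -(k : ℝ) * φ s < s * φ' s)
    (hupp : ∀ s : ℝ, 0 < s → s * φ' s < 0) :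
    ∀ s t : ℝ, 0 < s → s < t →
      (s * φ s ^ (1 / (k : ℝ)) - t * φ t ^ (1 / (k : ℝ))) *
        (φ s ^ (((k : ℝ) - 1) / (k : ℝ)) - φ t ^ (((k : ℝ) - 1) / (k : ℝ))) < 0 := by
  have hK : (0:ℝ) < (k:ℝ) := by positivity
  set g : ℝ → ℝ := fun x => x * φ x ^ (1 / (k:ℝ)) with hg
  have hgd : ∀ x : ℝ, 0 < x → HasDerivAt g
      (1 * φ x ^ (1 / (k:ℝ)) + x * (φ' x * (1 / (k:ℝ)) * φ x ^ (1 / (k:ℝ) - 1))) x := by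
    intro x hx
    exact (hasDerivAt_id x).mul (((hderiv x hx).rpow_const (Or.inl (hpos x hx).ne')))
  -- strict monotonicity of g on Ioi 0
  have hmono : StrictMonoOn g (Set.Ioi 0) := by
    apply strictMonoOn_of_deriv_pos (convex_Ioi 0)
    · intro x hx
      exact ((hgd x hx).continuousAt).continuousWithinAt
    · intro x hx
      rw [interior_Ioi] at hx
      rw [(hgd x hx).deriv]
      have hφ := hpos x hx
      have hB : (0:ℝ) < φ x ^ (1 / (k:ℝ) - 1) := Real.rpow_pos_of_pos hφ _
      have hA : φ x ^ (1 / (k:ℝ)) = φ x ^ (1 / (k:ℝ) - 1) * φ x := by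
        rw [← Real.rpow_add_one hφ.ne']; ring_nf
      have hl := hlow x hx
      rw [hA]
      have : 1 * (φ x ^ (1 / (k:ℝ) - 1) * φ x) +
          x * (φ' x * (1 / (k:ℝ)) * φ x ^ (1 / (k:ℝ) - 1)) =
          φ x ^ (1 / (k:ℝ) - 1) * ((φ x * (k:ℝ) + x * φ' x) / (k:ℝ)) := by
        field_simp
      rw [this]
      apply mul_pos hB
      apply div_pos _ hK
      nlinarith
  -- strict antitonicity of φ on Ioi 0
  have hanti : StrictAntiOn φ (Set.Ioi 0) := by
    apply strictAntiOn_of_deriv_neg (convex_Ioi 0)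
    · intro x hx
      exact ((hderiv x hx).continuousAt).continuousWithinAt
    · intro x hx
      rw [interior_Ioi] at hx
      rw [(hderiv x hx).deriv]
      have hx0 : (0:ℝ) < x := hx
      have hx' : (0:ℝ) < x := hx
      have := hupp x hx'
      nlinarith
  intro s t hs hst
  have ht : 0 < t := hs.trans hst
  have h1 : g s < g t := hmono (Set.mem_Ioi.mpr hs) (Set.mem_Ioi.mpr ht) hst
  have h2 : φ t < φ s := hanti (Set.mem_Ioi.mpr hs) (Set.mem_Ioi.mpr ht) hst
  have he : (0:ℝ) < ((k:ℝ) - 1) / (k:ℝ) := by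
    apply div_pos _ hK
    have : (2:ℝ) ≤ (k:ℝ) := by exact_mod_cast hk
    linarith
  have h3 : φ t ^ (((k:ℝ) - 1) / (k:ℝ)) < φ s ^ (((k:ℝ) - 1) / (k:ℝ)) :=
    Real.rpow_lt_rpow (hpos t ht).le h2 he
  have h1' : s * φ s ^ (1 / (k:ℝ)) - t * φ t ^ (1 / (k:ℝ)) < 0 := by
    simp only [hg] at h1; linarith
  exact mul_neg_of_neg_of_pos h1' (by linarith)
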